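/- Let $n,r,k,t,a$ be positive integers with $k\ge2$, $t+2\le r\le n$ and $t+2\le a\le n$. For $b\in\{t+1,\dots,a\}$ let $\mathcal{N}_b$ denote the set of $F\in\mathcal{L}_{n,r,k}$ with $M_t\subseteq F$ and $|F\cap M_a|=b$. Then $\sum_{i=2}^{a-t}\binom{i}{2}|\mathcal{N}_{t+i}| = \binom{a-t}{2}\binom{n-t-2}{r-t-2}k^{r-t-2}$. -/

import Mathlib

open Finset

attribute [local instance] Classical.propDecidable

/-- The ground set `[n] × [k]`. -/
def box (n k : ℕ) : Finset (ℕ × ℕ) := Finset.Icc 1 n ×ˢ Finset.Icc 1 k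

/-- A `k`-signed set on `[n]`: a subset of `[n] × [k]` with pairwise distinct first coordinates. -/
def IsSigned (n k : ℕ) (T : Finset (ℕ × ℕ)) : Prop :=
  T ⊆ box n k ∧ (T.image Prod.fst).card = T.card

/-- `L n r k`: the collection of `k`-signed `r`-sets on `[n]`. -/
def L (n r k : ℕ) : Finset (Finset (ℕ × ℕ)) :=
  (box n k).powerset.filter (fun F => F.card = r ∧ (F.image Prod.fst).card = r)

/-- A family is `t`-intersecting if any two members meet in at least `t` elements. -/
def IsTIntersecting (t : ℕ) (F : Finset (Finset (ℕ × ℕ))) : Prop :=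
  ∀ A ∈ F, ∀ B ∈ F, t ≤ (A ∩ B).card

/-- `T` is a `t`-cover of the family `F`: a `k`-signed set meeting every member in ≥ `t` points. -/
def IsTCover (n k t : ℕ) (F : Finset (Finset (ℕ × ℕ))) (T : Finset (ℕ × ℕ)) : Prop :=
  IsSigned n k T ∧ ∀ A ∈ F, t ≤ (T ∩ A).card

/-- `F` is a maximal `t`-intersecting subfamily of `L n r k`. -/
def IsMaximalTIntersecting (n r k t : ℕ) (F : Finset (Finset (ℕ × ℕ))) : Prop :=
  F ⊆ L n r k ∧ IsTIntersecting t F ∧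
    ∀ G ⊆ L n r k, IsTIntersecting t G → F ⊆ G → G = F

/-- A `t`-intersecting family is trivial if all members contain a fixed `k`-signed `t`-set. -/
def IsTrivial (n k t : ℕ) (F : Finset (Finset (ℕ × ℕ))) : Prop :=
  ∃ T, IsSigned n k T ∧ T.card = t ∧ ∀ A ∈ F, T ⊆ A

/-- `Msig d = {(1,1),(2,1),…,(d,1)}`. -/
def Msig (d : ℕ) : Finset (ℕ × ℕ) := (Finset.Icc 1 d).image (fun x => (x, 1))

/-- The family `H₁(n,r,k,ℓ,t)`. -/
def H1 (n r k l t : ℕ) : Finset (Finset (ℕ × ℕ)) :=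
  (L n r k).filter (fun F =>
    (Msig t ⊆ F ∧ t + 1 ≤ (F ∩ Msig l).card) ∨
    (¬ Msig t ⊆ F ∧ (F ∩ Msig l).card = l - 1))

/-- The family `H₂(n,r,k,c,t)`. -/
def H2 (n r k c t : ℕ) : Finset (Finset (ℕ × ℕ)) :=
  (L n r k).filter (fun F =>
    (Msig t ⊆ F ∧ t + 1 ≤ (F ∩ Msig r).card) ∨
    (F ∩ Msig r = Msig t ∧ Msig c \ Msig r ⊆ F) ∨
    (¬ Msig t ⊆ F ∧ (F ∩ Msig r).card = r - 1 ∧ (F ∩ (Msig c \ Msig r)).card = 1))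

/-- The set of all `t`-covers of `F` of size `t+1`. -/
noncomputable def TauSet (n k t : ℕ) (F : Finset (Finset (ℕ × ℕ))) : Finset (Finset (ℕ × ℕ)) :=
  (box n k).powerset.filter (fun T => IsTCover n k t F T ∧ T.card = t + 1)
lemma lemC (A K : Finset ℕ) :
    (((A ×ˢ K).powerset).filter (fun G => G.image Prod.fst = A ∧ G.card = A.card)).card
      = K.card ^ A.card := by
  classical
  rw [← Finset.prod_const, ← Finset.card_pi]
  refine (Finset.card_bij (fun g (_ : g ∈ A.pi fun _ => K) =>
    A.attach.image (fun x => (x.1, g x.1 x.2))) ?_ ?_ ?_).symm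
  · intro g hg
    have hinj : Set.InjOn (fun x : {x // x ∈ A} => (x.1, g x.1 x.2)) A.attach := by
      intro x _ y _ h
      exact Subtype.ext (congrArg Prod.fst h)
    simp only [Finset.mem_filter, Finset.mem_powerset]
    refine ⟨?_, ?_, ?_⟩
    · intro p hp
      simp only [Finset.mem_image, Finset.mem_attach, true_and] at hp
      obtain ⟨x, rfl⟩ := hp
      exact Finset.mem_product.2 ⟨x.2, Finset.mem_pi.1 hg x.1 x.2⟩
    · rw [Finset.image_image]
      exact Finset.attach_image_val
    · rw [Finset.card_image_of_injOn hinj, Finset.card_attach]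
  · intro g₁ h₁ g₂ h₂ h
    funext x hx
    have hm : (x, g₁ x hx) ∈ A.attach.image (fun y : {y // y ∈ A} => (y.1, g₂ y.1 y.2)) := by
      rw [← h]
      exact Finset.mem_image.2 ⟨⟨x, hx⟩, Finset.mem_attach _ _, rfl⟩
    obtain ⟨y, -, hy⟩ := Finset.mem_image.1 hm
    have h1 : y.1 = x := congrArg Prod.fst hy
    have h2 := congrArg Prod.snd hy
    simp only at h2
    subst h1
    exact (h2.symm)
  · intro G hG
    simp only [Finset.mem_filter, Finset.mem_powerset] at hG
    obtain ⟨hGsub, hGim, hGcard⟩ := hG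
    have hex : ∀ x ∈ A, ∃ y, (x, y) ∈ G := by
      intro x hx
      rw [← hGim] at hx
      obtain ⟨p, hp, hpx⟩ := Finset.mem_image.1 hx
      exact ⟨p.2, by subst hpx; simpa using hp⟩
    refine ⟨fun x hx => Classical.choose (hex x hx), ?_, ?_⟩
    · refine Finset.mem_pi.2 fun x hx => ?_
      have := Classical.choose_spec (hex x hx)
      exact (Finset.mem_product.1 (hGsub this)).2
    · have hsub : A.attach.image
          (fun x : {x // x ∈ A} => (x.1, Classical.choose (hex x.1 x.2))) ⊆ G := by
        intro p hp
        obtain ⟨x, -, rfl⟩ := Finset.mem_image.1 hp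
        exact Classical.choose_spec (hex x.1 x.2)
      have hcard : (A.attach.image
          (fun x : {x // x ∈ A} => (x.1, Classical.choose (hex x.1 x.2)))).card = A.card := by
        rw [Finset.card_image_of_injOn, Finset.card_attach]
        intro x _ y _ h
        exact Subtype.ext (congrArg Prod.fst h)
      exact Finset.eq_of_subset_of_card_le hsub (by rw [hcard, hGcard])

lemma lemB (S K : Finset ℕ) (j : ℕ) :
    (((S ×ˢ K).powerset).filter (fun G => G.card = j ∧ (G.image Prod.fst).card = j)).card
      = S.card.choose j * K.card ^ j := by
  classical
  set T := ((S ×ˢ K).powerset).filter (fun G => G.card = j ∧ (G.image Prod.fst).card = j)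
  have hmaps : ∀ G ∈ T, G.image Prod.fst ∈ S.powersetCard j := by
    intro G hG
    simp only [T, Finset.mem_filter, Finset.mem_powerset] at hG
    refine Finset.mem_powersetCard.2 ⟨?_, hG.2.2⟩
    intro x hx
    obtain ⟨p, hp, rfl⟩ := Finset.mem_image.1 hx
    exact (Finset.mem_product.1 (hG.1 hp)).1
  rw [Finset.card_eq_sum_card_fiberwise hmaps]
  have hfib : ∀ A ∈ S.powersetCard j,
      (T.filter (fun G => G.image Prod.fst = A)).card = K.card ^ j := by
    intro A hA
    obtain ⟨hAS, hAcard⟩ := Finset.mem_powersetCard.1 hA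
    have : T.filter (fun G => G.image Prod.fst = A)
        = ((A ×ˢ K).powerset).filter (fun G => G.image Prod.fst = A ∧ G.card = A.card) := by
      ext G
      simp only [T, Finset.mem_filter, Finset.mem_powerset]
      constructor
      · rintro ⟨⟨hsub, hc, hic⟩, him⟩
        refine ⟨?_, him, by omega⟩
        intro p hp
        refine Finset.mem_product.2 ⟨?_, (Finset.mem_product.1 (hsub hp)).2⟩
        rw [← him]
        exact Finset.mem_image_of_mem _ hp
      · rintro ⟨hsub, him, hc⟩
        refine ⟨⟨hsub.trans (Finset.product_subset_product_left hAS), by omega, ?_⟩, him⟩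
        rw [him]; omega
    rw [this, lemC]
    rw [hAcard]
  rw [Finset.sum_congr rfl hfib, Finset.sum_const, Finset.card_powersetCard, smul_eq_mul]

lemma lemA (n r k s : ℕ) (I : Finset (ℕ × ℕ)) (hI : IsSigned n k I)
    (hIs : I.card = s) (hsr : s ≤ r) :
    ((L n r k).filter (fun F => I ⊆ F)).card
      = (n - s).choose (r - s) * k ^ (r - s) := by
  classical
  obtain ⟨hIbox, hIim⟩ := hI
  have hJS : I.image Prod.fst ⊆ Finset.Icc 1 n := by
    intro x hx
    obtain ⟨p, hp, rfl⟩ := Finset.mem_image.1 hx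
    exact (Finset.mem_product.1 (hIbox hp)).1
  have hJcard : (I.image Prod.fst).card = s := by rw [hIim, hIs]
  have hS : (Finset.Icc 1 n \ I.image Prod.fst).card = n - s := by
    rw [Finset.card_sdiff_of_subset hJS, Nat.card_Icc, hJcard]; omega
  have hKc : (Finset.Icc 1 k).card = k := by rw [Nat.card_Icc]; omega
  have key : ((L n r k).filter (fun F => I ⊆ F)).card
      = ((((Finset.Icc 1 n \ I.image Prod.fst) ×ˢ Finset.Icc 1 k).powerset).filter
          (fun G => G.card = r - s ∧ (G.image Prod.fst).card = r - s)).card := by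
    refine Finset.card_bij (fun F (_ : F ∈ (L n r k).filter (fun F => I ⊆ F)) => F \ I) ?_ ?_ ?_
    · intro F hF
      simp only [L, Finset.mem_filter, Finset.mem_powerset] at hF
      obtain ⟨⟨hFbox, hFc, hFic⟩, hIF⟩ := hF
      have hinjF : Set.InjOn Prod.fst (↑F : Set (ℕ × ℕ)) := Finset.card_image_iff.1 (by rw [hFic, hFc])
      simp only [Finset.mem_filter, Finset.mem_powerset]
      refine ⟨?_, ?_, ?_⟩
      · intro p hp
        obtain ⟨hpF, hpI⟩ := Finset.mem_sdiff.1 hp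
        have hpb := Finset.mem_product.1 (hFbox hpF)
        refine Finset.mem_product.2 ⟨Finset.mem_sdiff.2 ⟨hpb.1, ?_⟩, hpb.2⟩
        intro hmem
        obtain ⟨q, hq, hqp⟩ := Finset.mem_image.1 hmem
        have : q = p := hinjF (Finset.mem_coe.2 (hIF hq)) (Finset.mem_coe.2 hpF) hqp
        exact hpI (this ▸ hq)
      · rw [Finset.card_sdiff_of_subset hIF, hFc, hIs]
      · rw [Finset.card_image_of_injOn (hinjF.mono (Finset.coe_subset.2 Finset.sdiff_subset))]
        rw [Finset.card_sdiff_of_subset hIF, hFc, hIs]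
    · intro F₁ h₁ F₂ h₂ h
      simp only [L, Finset.mem_filter, Finset.mem_powerset] at h₁ h₂
      have h' : F₁ \ I = F₂ \ I := h
      rw [← Finset.sdiff_union_of_subset h₁.2, ← Finset.sdiff_union_of_subset h₂.2, h']
    · intro G hG
      simp only [Finset.mem_filter, Finset.mem_powerset] at hG
      obtain ⟨hGsub, hGc, hGic⟩ := hG
      have hdisj : Disjoint G I := by
        rw [Finset.disjoint_left]
        intro p hpG hpI
        have := (Finset.mem_product.1 (hGsub hpG)).1
        exact (Finset.mem_sdiff.1 this).2 (Finset.mem_image_of_mem _ hpI)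
      have hdisjim : Disjoint (G.image Prod.fst) (I.image Prod.fst) := by
        rw [Finset.disjoint_left]
        intro x hx hxI
        obtain ⟨p, hp, rfl⟩ := Finset.mem_image.1 hx
        exact (Finset.mem_sdiff.1 (Finset.mem_product.1 (hGsub hp)).1).2 hxI
      refine ⟨G ∪ I, ?_, ?_⟩
      · simp only [L, Finset.mem_filter, Finset.mem_powerset]
        refine ⟨⟨?_, ?_, ?_⟩, Finset.subset_union_right⟩
        · refine Finset.union_subset ?_ hIbox
          exact hGsub.trans (Finset.product_subset_product_left Finset.sdiff_subset)
        · rw [Finset.card_union_of_disjoint hdisj, hGc, hIs]; omega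
        · rw [Finset.image_union, Finset.card_union_of_disjoint hdisjim, hGic, hJcard]; omega
      · show (G ∪ I) \ I = G
        exact Finset.union_sdiff_cancel_right hdisj
  rw [key, lemB, hS, hKc]

lemma Msig_card (d : ℕ) : (Msig d).card = d := by
  rw [Msig, Finset.card_image_of_injective _ (fun x y h => (congrArg Prod.fst h : x = y)),
    Nat.card_Icc]
  omega

lemma Msig_subset {c d : ℕ} (h : c ≤ d) : Msig c ⊆ Msig d :=
  Finset.image_subset_image (Finset.Icc_subset_Icc le_rfl h)

lemma Msig_snd {d : ℕ} {p : ℕ × ℕ} (hp : p ∈ Msig d) : p.2 = 1 := by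
  obtain ⟨x, -, rfl⟩ := Finset.mem_image.1 hp
  rfl

lemma Msig_signed {n k a : ℕ} (han : a ≤ n) (hk : 1 ≤ k) {I : Finset (ℕ × ℕ)}
    (hIa : I ⊆ Msig a) : IsSigned n k I := by
  constructor
  · intro p hp
    obtain ⟨x, hx, rfl⟩ := Finset.mem_image.1 (hIa hp)
    refine Finset.mem_product.2 ⟨?_, ?_⟩
    · exact Finset.mem_Icc.2 ⟨(Finset.mem_Icc.1 hx).1, le_trans (Finset.mem_Icc.1 hx).2 han⟩
    · exact Finset.mem_Icc.2 ⟨le_rfl, hk⟩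
  · refine Finset.card_image_of_injOn ?_
    intro p hp q hq h
    exact Prod.ext h ((Msig_snd (hIa hp)).trans (Msig_snd (hIa hq)).symm)


theorem double_count_second (n r k t a : ℕ) (hn : 0 < n) (ht : 0 < t)
    (hk : 2 ≤ k) (htr : t + 2 ≤ r) (hrn : r ≤ n) (hta : t + 2 ≤ a) (han : a ≤ n) :
    ∑ i ∈ Finset.Icc 2 (a - t),
        i.choose 2 * ((L n r k).filter (fun F => Msig t ⊆ F ∧ (F ∩ Msig a).card = t + i)).card =
      (a - t).choose 2 * (n - t - 2).choose (r - t - 2) * k ^ (r - t - 2) := by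
  classical
  have hta' : t ≤ a := by omega
  have hMta : Msig t ⊆ Msig a := Msig_subset hta'
  set X := Msig a \ Msig t with hX
  set P := X.powersetCard 2 with hP
  set T0 := (L n r k).filter (fun F => Msig t ⊆ F) with hT0
  have hXcard : X.card = a - t := by
    rw [hX, Finset.card_sdiff_of_subset hMta, Msig_card, Msig_card]
  have hPcard : P.card = (a - t).choose 2 := by
    rw [hP, Finset.card_powersetCard, hXcard]
  -- step 1: theorem LHS = ∑_{b in Icc t a} (b-t).choose 2 * N_b
  have step1 : ∑ i ∈ Finset.Icc 2 (a - t),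
        i.choose 2 * ((L n r k).filter (fun F => Msig t ⊆ F ∧ (F ∩ Msig a).card = t + i)).card
      = ∑ b ∈ Finset.Icc t a,
        (b - t).choose 2 * (T0.filter (fun F => (F ∩ Msig a).card = b)).card := by
    have h1 : ∀ i, (L n r k).filter (fun F => Msig t ⊆ F ∧ (F ∩ Msig a).card = t + i)
        = T0.filter (fun F => (F ∩ Msig a).card = t + i) := by
      intro i; rw [hT0, Finset.filter_filter]
    have hinj : ∀ x ∈ Finset.Icc (t+2) a, ∀ y ∈ Finset.Icc (t+2) a, x - t = y - t → x = y := by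
      intro x hx y hy h
      simp only [Finset.mem_Icc] at hx hy
      omega
    have himg : Finset.Icc 2 (a - t) = (Finset.Icc (t+2) a).image (fun b => b - t) := by
      ext i
      simp only [Finset.mem_Icc, Finset.mem_image]
      constructor
      · rintro ⟨h2, hat⟩
        exact ⟨t + i, ⟨by omega, by omega⟩, by omega⟩
      · rintro ⟨b, hb, rfl⟩
        omega
    rw [Finset.sum_congr rfl (fun i _ => by rw [h1]), himg, Finset.sum_image hinj]
    have hcong : ∀ b ∈ Finset.Icc (t+2) a,
        (b - t).choose 2 * (T0.filter (fun F => (F ∩ Msig a).card = t + (b - t))).card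
          = (b - t).choose 2 * (T0.filter (fun F => (F ∩ Msig a).card = b)).card := by
      intro b hb
      simp only [Finset.mem_Icc] at hb
      have hb' : t + (b - t) = b := by omega
      rw [hb']
    rw [Finset.sum_congr rfl hcong]
    refine Finset.sum_subset (Finset.Icc_subset_Icc (by omega) le_rfl) ?_
    intro b hb hnb
    simp only [Finset.mem_Icc, not_and, not_le] at hb hnb
    rw [Nat.choose_eq_zero_of_lt (show b - t < 2 by omega), zero_mul]
  -- step 2: fiberwise
  have hcard_mem : ∀ F ∈ T0, (F ∩ Msig a).card ∈ Finset.Icc t a := by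
    intro F hF
    simp only [hT0, Finset.mem_filter] at hF
    refine Finset.mem_Icc.2 ⟨?_, ?_⟩
    · calc t = (Msig t).card := (Msig_card t).symm
        _ ≤ (F ∩ Msig a).card :=
          Finset.card_le_card (Finset.subset_inter hF.2 hMta)
    · calc (F ∩ Msig a).card ≤ (Msig a).card := Finset.card_le_card Finset.inter_subset_right
        _ = a := Msig_card a
  have step2 : ∑ b ∈ Finset.Icc t a,
        (b - t).choose 2 * (T0.filter (fun F => (F ∩ Msig a).card = b)).card
      = ∑ F ∈ T0, ((F ∩ Msig a).card - t).choose 2 := by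
    rw [← Finset.sum_fiberwise_of_maps_to hcard_mem
      (fun F => ((F ∩ Msig a).card - t).choose 2)]
    refine Finset.sum_congr rfl fun b _ => ?_
    rw [Finset.sum_congr rfl (fun F hF => ?_), Finset.sum_const, smul_eq_mul, mul_comm]
    simp only [Finset.mem_filter] at hF
    rw [hF.2]
  -- step 3: per-F count equals choose of X∩F
  have step3 : ∀ F ∈ T0, ((F ∩ Msig a).card - t).choose 2 = ((X ∩ F).card).choose 2 := by
    intro F hF
    simp only [hT0, Finset.mem_filter] at hF
    have hXF : X ∩ F = (F ∩ Msig a) \ Msig t := by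
      ext p
      simp only [hX, Finset.mem_inter, Finset.mem_sdiff]
      tauto
    rw [hXF, Finset.card_sdiff_of_subset (Finset.subset_inter hF.2 hMta), Msig_card]
  -- step 4: exchange
  have step4 : ∑ F ∈ T0, ((X ∩ F).card).choose 2
      = ∑ e ∈ P, ((L n r k).filter (fun F => Msig t ∪ e ⊆ F)).card := by
    have hfib : ∀ F ∈ L n r k, (P.filter (fun e => Msig t ∪ e ⊆ F)).card
        = if Msig t ⊆ F then ((X ∩ F).card).choose 2 else 0 := by
      intro F _
      by_cases hMF : Msig t ⊆ F
      · rw [if_pos hMF]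
        have : P.filter (fun e => Msig t ∪ e ⊆ F) = (X ∩ F).powersetCard 2 := by
          ext e
          simp only [hP, Finset.mem_filter, Finset.mem_powersetCard,
            Finset.union_subset_iff, Finset.subset_inter_iff]
          constructor
          · rintro ⟨⟨heX, he2⟩, -, heF⟩; exact ⟨⟨heX, heF⟩, he2⟩
          · rintro ⟨⟨heX, heF⟩, he2⟩; exact ⟨⟨heX, he2⟩, hMF, heF⟩
        rw [this, Finset.card_powersetCard]
      · rw [if_neg hMF]
        rw [Finset.card_eq_zero, Finset.filter_eq_empty_iff]
        intro e _ he
        exact hMF ((Finset.union_subset_iff.1 he).1)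
    calc ∑ F ∈ T0, ((X ∩ F).card).choose 2
        = ∑ F ∈ L n r k, if Msig t ⊆ F then ((X ∩ F).card).choose 2 else 0 := by
          rw [hT0, Finset.sum_filter]
      _ = ∑ F ∈ L n r k, (P.filter (fun e => Msig t ∪ e ⊆ F)).card := by
          exact Finset.sum_congr rfl fun F hF => (hfib F hF).symm
      _ = ∑ F ∈ L n r k, ∑ e ∈ P, if Msig t ∪ e ⊆ F then 1 else 0 := by
          exact Finset.sum_congr rfl fun F _ => Finset.card_filter _ _
      _ = ∑ e ∈ P, ∑ F ∈ L n r k, if Msig t ∪ e ⊆ F then 1 else 0 := Finset.sum_comm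
      _ = ∑ e ∈ P, ((L n r k).filter (fun F => Msig t ∪ e ⊆ F)).card := by
          exact Finset.sum_congr rfl fun e _ => (Finset.card_filter _ _).symm
  -- step 5: apply lemA to each e
  have step5 : ∀ e ∈ P, ((L n r k).filter (fun F => Msig t ∪ e ⊆ F)).card
      = (n - (t+2)).choose (r - (t+2)) * k ^ (r - (t+2)) := by
    intro e heP
    obtain ⟨heX, he2⟩ := Finset.mem_powersetCard.1 heP
    have heMa : e ⊆ Msig a := heX.trans Finset.sdiff_subset
    have hdisj : Disjoint (Msig t) e := by
      rw [Finset.disjoint_right]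
      intro p hpe hpt
      exact (Finset.mem_sdiff.1 (heX hpe)).2 hpt
    refine lemA n r k (t+2) (Msig t ∪ e) ?_ ?_ (by omega)
    · exact Msig_signed han (by omega) (Finset.union_subset hMta heMa)
    · rw [Finset.card_union_of_disjoint hdisj, Msig_card, he2]
  rw [step1, step2, Finset.sum_congr rfl step3, step4,
    Finset.sum_congr rfl step5, Finset.sum_const, smul_eq_mul, hPcard,
    Nat.sub_sub, Nat.sub_sub, mul_assoc]
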